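/- Assume (G), (L) and (M), and suppose there exists r1 > 0 with M(r1,L) > R0. Then the order of L, ρ_L = limsup_{r→∞} (m−1)·(log log M(r,L))/(log r), satisfies (log d − log K)/(log 2) ≤ ρ_L ≤ (log d + log K)/(log 2). -/

import Mathlib

/-- The maximum modulus `M(r,g) = max_{‖x‖ = r} ‖g(x)‖` (as a supremum). -/
noncomputable def maxMod {m : ℕ} (g : EuclideanSpace ℝ (Fin m) → EuclideanSpace ℝ (Fin m))
    (r : ℝ) : ℝ :=
  sSup ((fun x => ‖g x‖) '' {x : EuclideanSpace ℝ (Fin m) | ‖x‖ = r})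

lemma maxMod_exists {m : ℕ} (hm : 2 ≤ m)
    (L : EuclideanSpace ℝ (Fin m) → EuclideanSpace ℝ (Fin m)) (hL : Continuous L)
    {r : ℝ} (hr : 0 ≤ r) :
    ∃ x : EuclideanSpace ℝ (Fin m), ‖x‖ = r ∧ maxMod L r = ‖L x‖ ∧
      ∀ y : EuclideanSpace ℝ (Fin m), ‖y‖ = r → ‖L y‖ ≤ maxMod L r := by
  haveI : Nonempty (Fin m) := ⟨⟨0, by omega⟩⟩
  have hset : {x : EuclideanSpace ℝ (Fin m) | ‖x‖ = r} = Metric.sphere 0 r := by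
    ext x; simp [Metric.mem_sphere, dist_zero_right]
  have hcpt : IsCompact {x : EuclideanSpace ℝ (Fin m) | ‖x‖ = r} := by
    rw [hset]; exact isCompact_sphere 0 r
  have hne : ({x : EuclideanSpace ℝ (Fin m) | ‖x‖ = r}).Nonempty := exists_norm_eq _ hr
  obtain ⟨x, hx, hmax⟩ := hcpt.exists_isMaxOn hne (hL.norm.continuousOn)
  have hgreat : IsGreatest ((fun x => ‖L x‖) '' {x : EuclideanSpace ℝ (Fin m) | ‖x‖ = r}) ‖L x‖ :=
    ⟨⟨x, hx, rfl⟩, by rintro _ ⟨y, hy, rfl⟩; exact hmax hy⟩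
  have heq : maxMod L r = ‖L x‖ := hgreat.csSup_eq
  exact ⟨x, hx, heq, fun y hy => heq ▸ hmax hy⟩

lemma step_up {m : ℕ} (hm : 2 ≤ m) (b R0 C2 : ℝ) (hb : 0 < b) (hR0 : 0 ≤ R0) (hC2 : 0 < C2)
    (f L : EuclideanSpace ℝ (Fin m) → EuclideanSpace ℝ (Fin m)) (hLcont : Continuous L)
    (hup : ∀ y : EuclideanSpace ℝ (Fin m), ‖f y‖ ≤ C2 * (max ‖y‖ R0) ^ b)
    (hfunc : ∀ x : EuclideanSpace ℝ (Fin m), f (L x) = L ((2 : ℝ) • x))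
    {r : ℝ} (hr : 0 < r) :
    maxMod L (2*r) ≤ C2 * (max (maxMod L r) R0) ^ b := by
  obtain ⟨x, hx, hMx, -⟩ := maxMod_exists hm L hLcont (by linarith : (0:ℝ) ≤ 2*r)
  obtain ⟨-, -, -, hub⟩ := maxMod_exists hm L hLcont hr.le
  set y : EuclideanSpace ℝ (Fin m) := (2:ℝ)⁻¹ • x with hy
  have hyx : (2:ℝ) • y = x := by rw [hy, smul_smul]; norm_num
  have hyn : ‖y‖ = r := by
    rw [hy, norm_smul, hx]; simp
  have hLy : ‖L y‖ ≤ maxMod L r := hub y hyn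
  calc maxMod L (2*r) = ‖L ((2:ℝ) • y)‖ := by rw [hyx, hMx]
    _ = ‖f (L y)‖ := by rw [hfunc]
    _ ≤ C2 * (max ‖L y‖ R0) ^ b := hup _
    _ ≤ C2 * (max (maxMod L r) R0) ^ b := by
        apply mul_le_mul_of_nonneg_left _ hC2.le
        exact Real.rpow_le_rpow (le_max_of_le_right hR0) (max_le_max hLy le_rfl) hb.le

lemma step_lo {m : ℕ} (hm : 2 ≤ m) (a R0 C1 : ℝ)
    (f L : EuclideanSpace ℝ (Fin m) → EuclideanSpace ℝ (Fin m)) (hLcont : Continuous L)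
    (hlow : ∀ y : EuclideanSpace ℝ (Fin m), R0 < ‖y‖ → C1 * ‖y‖ ^ a ≤ ‖f y‖)
    (hfunc : ∀ x : EuclideanSpace ℝ (Fin m), f (L x) = L ((2 : ℝ) • x))
    {r : ℝ} (hr : 0 < r) (hMr : R0 < maxMod L r) :
    C1 * (maxMod L r) ^ a ≤ maxMod L (2*r) := by
  obtain ⟨x, hx, hMx, -⟩ := maxMod_exists hm L hLcont hr.le
  obtain ⟨-, -, -, hub⟩ := maxMod_exists hm L hLcont (by linarith : (0:ℝ) ≤ 2*r)
  have h2x : ‖(2:ℝ) • x‖ = 2*r := by rw [norm_smul, hx]; simp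
  calc C1 * (maxMod L r) ^ a = C1 * ‖L x‖ ^ a := by rw [hMx]
    _ ≤ ‖f (L x)‖ := hlow _ (hMx ▸ hMr)
    _ = ‖L ((2:ℝ) • x)‖ := by rw [hfunc]
    _ ≤ maxMod L (2*r) := hub _ h2x

lemma div_lower_aux {N Lr c0 : ℝ} (hc0 : c0 ≤ 0) (hN : c0 ≤ N) (hLr : 1 ≤ Lr) :
    c0 ≤ N / Lr := by
  rcases le_or_gt 0 N with h | h
  · exact hc0.trans (div_nonneg h (by linarith))
  · have h1 : N ≤ N / Lr := by
      rw [le_div_iff₀ (by linarith : (0:ℝ) < Lr)]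
      nlinarith
    linarith

/-- Theorem 1.4 (order part): the order
`ρ_L = limsup_{r→∞} (m−1)·log log M(r,L) / log r` of a Poincaré linearizer satisfies
`(log d − log K)/log 2 ≤ ρ_L ≤ (log d + log K)/log 2`. -/
theorem order_of_linearizer {m : ℕ} (hm : 2 ≤ m) (d K : ℝ) (hK : 1 ≤ K) (hdK : K < d)
    (a b : ℝ) (ha : a = (d / K) ^ ((1 : ℝ) / ((m : ℝ) - 1)))
    (hb : b = (d * K) ^ ((1 : ℝ) / ((m : ℝ) - 1)))
    (R0 C1 C2 : ℝ) (hR0 : 1 ≤ R0) (hC1 : 0 < C1) (hC2 : 1 ≤ C2)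
    (hbig : 1 < C1 * R0 ^ (a - 1))
    (f L : EuclideanSpace ℝ (Fin m) → EuclideanSpace ℝ (Fin m))
    (hlow : ∀ y : EuclideanSpace ℝ (Fin m), R0 < ‖y‖ → C1 * ‖y‖ ^ a ≤ ‖f y‖)
    (hup : ∀ y : EuclideanSpace ℝ (Fin m), ‖f y‖ ≤ C2 * (max ‖y‖ R0) ^ b)
    (hLcont : Continuous L)
    (hfunc : ∀ x : EuclideanSpace ℝ (Fin m), f (L x) = L ((2 : ℝ) • x))
    (hmono : ∀ r s : ℝ, 0 < r → r ≤ s → maxMod L r ≤ maxMod L s)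
    (r1 : ℝ) (hr1 : 0 < r1) (hMr1 : R0 < maxMod L r1) :
    (Real.log d - Real.log K) / Real.log 2 ≤
      Filter.limsup
        (fun r : ℝ => ((m : ℝ) - 1) * Real.log (Real.log (maxMod L r)) / Real.log r)
        Filter.atTop ∧
    Filter.limsup
        (fun r : ℝ => ((m : ℝ) - 1) * Real.log (Real.log (maxMod L r)) / Real.log r)
        Filter.atTop ≤ (Real.log d + Real.log K) / Real.log 2 := by
  classical
  set T : ℝ → ℝ := fun r => ((m : ℝ) - 1) * Real.log (Real.log (maxMod L r)) / Real.log r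
    with hTdef
  -- basic constants
  have hm2 : (2:ℝ) ≤ (m:ℝ) := by exact_mod_cast hm
  have hm1 : (1:ℝ) ≤ (m:ℝ) - 1 := by linarith
  have hm1pos : (0:ℝ) < (m:ℝ) - 1 := by linarith
  have hKpos : (0:ℝ) < K := by linarith
  have hdpos : (0:ℝ) < d := by linarith
  have hexp : (0:ℝ) < 1 / ((m:ℝ) - 1) := by positivity
  have hdK1 : 1 < d / K := (one_lt_div hKpos).mpr hdK
  have hdKmul : 1 < d * K := by nlinarith
  have ha1 : 1 < a := by
    rw [ha]; exact (Real.one_lt_rpow_iff_of_pos (by linarith)).mpr (Or.inl ⟨hdK1, hexp⟩)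
  have hb1 : 1 < b := by
    rw [hb]; exact (Real.one_lt_rpow_iff_of_pos (by linarith)).mpr (Or.inl ⟨hdKmul, hexp⟩)
  have hapos : (0:ℝ) < a := by linarith
  have hbpos : (0:ℝ) < b := by linarith
  have hloga : ((m:ℝ)-1) * Real.log a = Real.log d - Real.log K := by
    rw [ha, Real.log_rpow (by linarith), Real.log_div hdpos.ne' hKpos.ne']
    field_simp
  have hlogb : ((m:ℝ)-1) * Real.log b = Real.log d + Real.log K := by
    rw [hb, Real.log_rpow (by linarith), Real.log_mul hdpos.ne' hKpos.ne']
    field_simp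
  have hlog2 : (0:ℝ) < Real.log 2 := Real.log_pos one_lt_two
  obtain ⟨α, hα⟩ : ∃ α : ℝ, α = (Real.log d - Real.log K) / Real.log 2 := ⟨_, rfl⟩
  obtain ⟨β, hβ⟩ : ∃ β : ℝ, β = (Real.log d + Real.log K) / Real.log 2 := ⟨_, rfl⟩
  -- monotonicity consequences
  have hMge : ∀ r, r1 ≤ r → R0 < maxMod L r := fun r hr =>
    lt_of_lt_of_le hMr1 (hmono r1 r hr1 hr)
  have hMgt1 : ∀ r, r1 ≤ r → 1 < maxMod L r := fun r hr => lt_of_le_of_lt hR0 (hMge r hr)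
  -- the sequence u
  set u : ℕ → ℝ := fun n => Real.log (maxMod L (2^n * r1)) with hudef
  have hrn_pos : ∀ n : ℕ, (0:ℝ) < 2^n * r1 := fun n => by positivity
  have hrn_ge : ∀ n : ℕ, r1 ≤ 2^n * r1 := fun n =>
    le_mul_of_one_le_left hr1.le (one_le_pow₀ (by norm_num))
  have hMn : ∀ n, R0 < maxMod L (2^n * r1) := fun n => hMge _ (hrn_ge n)
  have hMn1 : ∀ n, 1 < maxMod L (2^n * r1) := fun n => hMgt1 _ (hrn_ge n)
  have hMnpos : ∀ n, (0:ℝ) < maxMod L (2^n * r1) := fun n => lt_trans one_pos (hMn1 n)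
  have hu_pos : ∀ n, 0 < u n := fun n => Real.log_pos (hMn1 n)
  have hu0eq : u 0 = Real.log (maxMod L r1) := by simp [hudef]
  have hlogR0u0 : Real.log R0 ≤ u 0 := by
    rw [hu0eq]; exact Real.log_le_log (by linarith) hMr1.le
  -- recursions
  have hrec_up : ∀ n, u (n+1) ≤ Real.log C2 + b * u n := by
    intro n
    have e : (2:ℝ)^(n+1) * r1 = 2 * (2^n * r1) := by ring
    have hstep := step_up hm b R0 C2 hbpos (by linarith) (by linarith) f L hLcont hup hfunc
      (hrn_pos n)
    rw [max_eq_left (hMn n).le] at hstep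
    have h1 : maxMod L (2^(n+1) * r1) ≤ C2 * (maxMod L (2^n * r1)) ^ b := by
      rw [e]; exact hstep
    have h2 : u (n+1) ≤ Real.log (C2 * (maxMod L (2^n * r1)) ^ b) :=
      Real.log_le_log (hMnpos (n+1)) h1
    rwa [Real.log_mul (by positivity : C2 ≠ 0) (Real.rpow_pos_of_pos (hMnpos n) b).ne',
      Real.log_rpow (hMnpos n)] at h2
  have hrec_lo : ∀ n, Real.log C1 + a * u n ≤ u (n+1) := by
    intro n
    have e : (2:ℝ)^(n+1) * r1 = 2 * (2^n * r1) := by ring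
    have hstep := step_lo hm a R0 C1 f L hLcont hlow hfunc (hrn_pos n) (hMn n)
    have h1 : C1 * (maxMod L (2^n * r1)) ^ a ≤ maxMod L (2^(n+1) * r1) := by
      rw [e]; exact hstep
    have h2 : Real.log (C1 * (maxMod L (2^n * r1)) ^ a) ≤ u (n+1) :=
      Real.log_le_log (mul_pos hC1 (Real.rpow_pos_of_pos (hMnpos n) a)) h1
    rwa [Real.log_mul hC1.ne' (Real.rpow_pos_of_pos (hMnpos n) a).ne',
      Real.log_rpow (hMnpos n)] at h2
  -- growth of u : lower bound
  obtain ⟨c, hcdef⟩ : ∃ c : ℝ, c = Real.log C1 / (a - 1) := ⟨_, rfl⟩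
  obtain ⟨v0, hv0def⟩ : ∃ v0 : ℝ, v0 = u 0 + c := ⟨_, rfl⟩
  have hane : a - 1 ≠ 0 := by linarith
  have hac : a * c = c + Real.log C1 := by
    rw [hcdef]; field_simp; ring
  have hv : ∀ n, a^n * v0 ≤ u n + c := by
    intro n; induction n with
    | zero => rw [hv0def]; simp
    | succ n ih =>
      have h1 : a * (a^n * v0) ≤ a * (u n + c) := mul_le_mul_of_nonneg_left ih hapos.le
      have h2 := hrec_lo n
      calc a^(n+1) * v0 = a * (a^n * v0) := by ring
        _ ≤ a * (u n + c) := h1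
        _ = (Real.log C1 + a * u n) + c := by rw [mul_add, hac]; ring
        _ ≤ u (n+1) + c := by linarith
  have hv0pos : 0 < v0 := by
    have hlogbig : 0 < Real.log C1 + (a-1) * Real.log R0 := by
      have h0 := Real.log_pos hbig
      rwa [Real.log_mul hC1.ne' (by positivity), Real.log_rpow (by linarith)] at h0
    have h1 : (a-1) * Real.log R0 ≤ (a-1) * u 0 :=
      mul_le_mul_of_nonneg_left hlogR0u0 (by linarith)
    have hc1 : (a-1) * c = Real.log C1 := by rw [sub_mul, hac]; ring
    have h2 : 0 < (a-1) * v0 := by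
      have e : (a-1) * v0 = (a-1) * u 0 + Real.log C1 := by rw [hv0def, mul_add, hc1]
      rw [e]; linarith
    have h3 := div_pos h2 (by linarith : (0:ℝ) < a - 1)
    rwa [mul_div_cancel_left₀ _ hane] at h3
  -- growth of u : upper bound
  obtain ⟨c2, hc2def⟩ : ∃ c2 : ℝ, c2 = Real.log C2 / (b - 1) := ⟨_, rfl⟩
  obtain ⟨w0, hw0def⟩ : ∃ w0 : ℝ, w0 = u 0 + c2 := ⟨_, rfl⟩
  have hbne : b - 1 ≠ 0 := by linarith
  have hbc : b * c2 = c2 + Real.log C2 := by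
    rw [hc2def]; field_simp; ring
  have hc2nonneg : 0 ≤ c2 := by
    rw [hc2def]; exact div_nonneg (Real.log_nonneg hC2) (by linarith)
  have hw0pos : 0 < w0 := by have := hu_pos 0; rw [hw0def]; linarith
  have hw : ∀ n, u n + c2 ≤ b^n * w0 := by
    intro n; induction n with
    | zero => rw [hw0def]; simp
    | succ n ih =>
      have h1 : b * (u n + c2) ≤ b * (b^n * w0) := mul_le_mul_of_nonneg_left ih hbpos.le
      calc u (n+1) + c2 ≤ (Real.log C2 + b * u n) + c2 := by linarith [hrec_up n]
        _ = b * (u n + c2) := by rw [mul_add, hbc]; ring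
        _ ≤ b * (b^n * w0) := h1
        _ = b^(n+1) * w0 := by ring
  have huw : ∀ n, u n ≤ b^n * w0 := fun n => by linarith [hw n]
  -- global upper bound for log M(r)
  obtain ⟨γ, hγdef⟩ : ∃ γ : ℝ, γ = Real.log b / Real.log 2 := ⟨_, rfl⟩
  have hUP : ∀ r : ℝ, 2 * r1 ≤ r → Real.log (maxMod L r) ≤ (b * w0) * (r / r1) ^ γ := by
    intro r hr
    have hrpos : 0 < r := by linarith
    have hr1r : r1 ≤ r := by linarith
    set t : ℝ := r / r1 with htdef
    have htpos : 0 < t := by positivity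
    have ht2 : 2 ≤ t := (le_div_iff₀ hr1).mpr (by linarith)
    set n : ℕ := ⌊Real.logb 2 t⌋₊ with hndef
    have hlb_nonneg : 0 ≤ Real.logb 2 t := Real.logb_nonneg one_lt_two (by linarith)
    have hfloor_le : (n:ℝ) ≤ Real.logb 2 t := Nat.floor_le hlb_nonneg
    have hlt : Real.logb 2 t < (n:ℝ) + 1 := Nat.lt_floor_add_one _
    have ht_lt : t < 2^(n+1) := by
      have hrlogb : (2:ℝ) ^ Real.logb 2 t = t := Real.rpow_logb (by norm_num) (by norm_num) htpos
      calc t = (2:ℝ) ^ Real.logb 2 t := hrlogb.symm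
        _ < (2:ℝ) ^ ((n:ℝ) + 1) := Real.rpow_lt_rpow_of_exponent_lt one_lt_two hlt
        _ = 2^(n+1) := by
            rw [← Real.rpow_natCast 2 (n+1)]; push_cast; ring_nf
    have hr_le : r ≤ 2^(n+1) * r1 := by
      have hrt : r = t * r1 := by rw [htdef, div_mul_cancel₀ r hr1.ne']
      rw [hrt]
      exact mul_le_mul_of_nonneg_right ht_lt.le hr1.le
    have hM : Real.log (maxMod L r) ≤ u (n+1) :=
      Real.log_le_log (by linarith [hMgt1 r hr1r]) (hmono r _ hrpos hr_le)
    have hbn : (b:ℝ)^(n+1) ≤ b * t ^ γ := by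
      have h1 : (b:ℝ)^n ≤ b ^ Real.logb 2 t := by
        rw [← Real.rpow_natCast b n]
        exact Real.rpow_le_rpow_of_exponent_le hb1.le hfloor_le
      have h2 : b ^ Real.logb 2 t = t ^ γ := by
        rw [Real.rpow_def_of_pos hbpos, Real.rpow_def_of_pos htpos, Real.logb, hγdef]
        congr 1; field_simp
      rw [h2] at h1
      calc (b:ℝ)^(n+1) = b * b^n := by ring
        _ ≤ b * t ^ γ := mul_le_mul_of_nonneg_left h1 hbpos.le
    calc Real.log (maxMod L r) ≤ u (n+1) := hM
      _ ≤ b^(n+1) * w0 := huw (n+1)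
      _ ≤ (b * t ^ γ) * w0 := mul_le_mul_of_nonneg_right hbn hw0pos.le
      _ = (b * w0) * t ^ γ := by ring
  -- eventual upper bound for T
  have hβγ : β = ((m:ℝ)-1) * γ := by
    rw [hβ, hγdef, ← hlogb]; ring
  obtain ⟨Cst, hCstdef⟩ : ∃ C : ℝ, C = Real.log (b * w0) - γ * Real.log r1 := ⟨_, rfl⟩
  have hg_tendsto :
      Filter.Tendsto (fun r : ℝ => ((m:ℝ)-1) * (Cst + γ * Real.log r) / Real.log r)
        Filter.atTop (nhds β) := by
    rw [hβγ]
    have h0 : Filter.Tendsto (fun r : ℝ => ((m:ℝ)-1) * Cst / Real.log r + ((m:ℝ)-1) * γ)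
        Filter.atTop (nhds (0 + ((m:ℝ)-1) * γ)) := by
      exact ((Filter.Tendsto.div_atTop tendsto_const_nhds Real.tendsto_log_atTop).add
        tendsto_const_nhds)
    rw [zero_add] at h0
    apply h0.congr'
    filter_upwards [Filter.eventually_gt_atTop (1:ℝ)] with r hr
    have hlr : Real.log r ≠ 0 := (Real.log_pos hr).ne'
    field_simp
  have hTle : ∀ᶠ r in Filter.atTop,
      T r ≤ ((m:ℝ)-1) * (Cst + γ * Real.log r) / Real.log r := by
    filter_upwards [Filter.eventually_ge_atTop (2*r1), Filter.eventually_gt_atTop (1:ℝ)]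
      with r hr2 hr1'
    have hr1r : r1 ≤ r := by linarith
    have hlogr : 0 < Real.log r := Real.log_pos hr1'
    have hlogM_pos : 0 < Real.log (maxMod L r) := Real.log_pos (hMgt1 r hr1r)
    have h1 := Real.log_le_log hlogM_pos (hUP r hr2)
    have htpos : (0:ℝ) < r / r1 := by positivity
    rw [Real.log_mul (by positivity) (by positivity), Real.log_rpow htpos,
      Real.log_div (by linarith : r ≠ 0) hr1.ne'] at h1
    have h2 : ((m:ℝ)-1) * Real.log (Real.log (maxMod L r)) ≤
        ((m:ℝ)-1) * (Cst + γ * Real.log r) := by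
      have e : Cst + γ * Real.log r = Real.log (b * w0) + γ * (Real.log r - Real.log r1) := by
        rw [hCstdef]; ring
      rw [e]
      exact mul_le_mul_of_nonneg_left h1 (by linarith)
    exact div_le_div_of_nonneg_right h2 hlogr.le
  have hE1 : ∀ ε : ℝ, 0 < ε → ∀ᶠ r in Filter.atTop, T r ≤ β + ε := by
    intro ε hε
    filter_upwards [hTle, hg_tendsto.eventually (eventually_le_nhds (by linarith : β < β + ε))]
      with r h1 h2
    exact h1.trans h2
  have hbdd : Filter.IsBoundedUnder (· ≤ ·) Filter.atTop T :=
    ⟨β + 1, by simpa [Filter.eventually_map] using hE1 1 one_pos⟩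
  -- cobounded below
  have hcobdd : Filter.IsBoundedUnder (· ≥ ·) Filter.atTop T := by
    set u0 : ℝ := Real.log (maxMod L r1) with hu0def
    have hu0pos : 0 < u0 := Real.log_pos (hMgt1 r1 le_rfl)
    refine ⟨-(((m:ℝ)-1) * |Real.log u0|), ?_⟩
    rw [Filter.eventually_map]
    filter_upwards [Filter.eventually_ge_atTop r1, Filter.eventually_ge_atTop (Real.exp 1)]
      with r hrr1 hrexp
    have hlogr1 : 1 ≤ Real.log r := by
      calc (1:ℝ) = Real.log (Real.exp 1) := (Real.log_exp 1).symm
        _ ≤ Real.log r := Real.log_le_log (Real.exp_pos 1) hrexp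
    have hlogrpos : 0 < Real.log r := by linarith
    have hMru0 : u0 ≤ Real.log (maxMod L r) :=
      Real.log_le_log (by linarith [hMgt1 r1 le_rfl]) (hmono r1 r hr1 hrr1)
    have hll : -|Real.log u0| ≤ Real.log (Real.log (maxMod L r)) := by
      calc -|Real.log u0| ≤ Real.log u0 := neg_abs_le _
        _ ≤ Real.log (Real.log (maxMod L r)) := Real.log_le_log hu0pos hMru0
    have hNge : -(((m:ℝ)-1) * |Real.log u0|) ≤
        ((m:ℝ)-1) * Real.log (Real.log (maxMod L r)) := by
      rw [neg_mul_eq_mul_neg]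
      exact mul_le_mul_of_nonneg_left hll (by linarith)
    have hc0 : -(((m:ℝ)-1) * |Real.log u0|) ≤ 0 := by
      have : 0 ≤ ((m:ℝ)-1) * |Real.log u0| := by positivity
      linarith
    exact div_lower_aux hc0 hNge hlogr1
  -- upper bound on limsup
  have hupper : Filter.limsup T Filter.atTop ≤ β := by
    apply le_of_forall_pos_le_add
    intro ε hε
    exact Filter.limsup_le_of_le hcobdd.isCoboundedUnder_le (hE1 ε hε)
  -- lower bound on limsup
  have hlower : α ≤ Filter.limsup T Filter.atTop := by
    have htends : Filter.Tendsto (fun n : ℕ => (2:ℝ)^n * r1) Filter.atTop Filter.atTop :=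
      (tendsto_pow_atTop_atTop_of_one_lt one_lt_two).atTop_mul_const hr1
    obtain ⟨K0, hK0def⟩ : ∃ K0 : ℝ, K0 = Real.log (v0/2) := ⟨_, rfl⟩
    -- eventually log u n ≥ n log a + K0
    have hloglow : ∀ᶠ n : ℕ in Filter.atTop,
        (n:ℝ) * Real.log a + K0 ≤ Real.log (u n) := by
      have hat : Filter.Tendsto (fun n : ℕ => a^n * (v0/2)) Filter.atTop Filter.atTop :=
        (tendsto_pow_atTop_atTop_of_one_lt ha1).atTop_mul_const (by linarith)
      filter_upwards [hat.eventually_ge_atTop c] with n hn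
      have h1 : a^n * (v0/2) ≤ u n := by linarith [hv n, hn]
      have hv02 : (0:ℝ) < v0/2 := by linarith
      have h2 : (0:ℝ) < a^n * (v0/2) := by positivity
      have h3 := Real.log_le_log h2 h1
      rw [hK0def]
      rwa [Real.log_mul (by positivity) hv02.ne', Real.log_pow] at h3
    -- the comparison sequence tends to α
    have hdenat : Filter.Tendsto (fun n : ℕ => (n:ℝ) * Real.log 2 + Real.log r1)
        Filter.atTop Filter.atTop :=
      Filter.tendsto_atTop_add_const_right _ _ (tendsto_natCast_atTop_atTop.atTop_mul_const hlog2)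
    have hstends : Filter.Tendsto
        (fun n : ℕ => ((m:ℝ)-1) * ((n:ℝ) * Real.log a + K0) / ((n:ℝ) * Real.log 2 + Real.log r1))
        Filter.atTop (nhds α) := by
      have hnum : Filter.Tendsto (fun n : ℕ => ((m:ℝ)-1) * (Real.log a + K0 / (n:ℝ)))
          Filter.atTop (nhds (((m:ℝ)-1) * (Real.log a + 0))) :=
        (tendsto_const_nhds.add (tendsto_const_div_atTop_nhds_zero_nat K0)).const_mul _
      have hden : Filter.Tendsto (fun n : ℕ => Real.log 2 + Real.log r1 / (n:ℝ))
          Filter.atTop (nhds (Real.log 2 + 0)) :=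
        tendsto_const_nhds.add (tendsto_const_div_atTop_nhds_zero_nat (Real.log r1))
      have hdiv := hnum.div hden (by rw [add_zero]; exact hlog2.ne')
      have hlim : ((m:ℝ)-1) * (Real.log a + 0) / (Real.log 2 + 0) = α := by
        rw [add_zero, add_zero, hα, ← hloga]
      rw [hlim] at hdiv
      apply hdiv.congr'
      filter_upwards [Filter.eventually_ge_atTop 1, hdenat.eventually_gt_atTop 0]
        with n hn1 hnden
      have hnne : ((n:ℝ)) ≠ 0 := by
        have : (1:ℝ) ≤ (n:ℝ) := by exact_mod_cast hn1
        linarith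
      have hnpos : (0:ℝ) < (n:ℝ) := by positivity
      have hd2eq : Real.log 2 + Real.log r1 / (n:ℝ)
          = ((n:ℝ) * Real.log 2 + Real.log r1) / (n:ℝ) := by
        field_simp
      have hd2pos : 0 < Real.log 2 + Real.log r1 / (n:ℝ) := by
        rw [hd2eq]; exact div_pos hnden hnpos
      simp only [Pi.div_apply]
      rw [div_eq_div_iff hd2pos.ne' hnden.ne']
      field_simp
    apply le_of_forall_pos_le_add
    intro ε hε
    have hsev : ∀ᶠ n : ℕ in Filter.atTop, α - ε ≤
        ((m:ℝ)-1) * ((n:ℝ) * Real.log a + K0) / ((n:ℝ) * Real.log 2 + Real.log r1) :=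
      hstends.eventually (eventually_ge_nhds (by linarith : α - ε < α))
    have hTev : ∀ᶠ n : ℕ in Filter.atTop, α - ε ≤ T ((2:ℝ)^n * r1) := by
      filter_upwards [hsev, hloglow, hdenat.eventually_gt_atTop 0] with n h1 h2 h3
      have hTn : T ((2:ℝ)^n * r1) =
          ((m:ℝ)-1) * Real.log (u n) / ((n:ℝ) * Real.log 2 + Real.log r1) := by
        show ((m:ℝ)-1) * Real.log (Real.log (maxMod L ((2:ℝ)^n * r1))) /
            Real.log ((2:ℝ)^n * r1) = _
        rw [Real.log_mul (by positivity) hr1.ne', Real.log_pow]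
      rw [hTn]
      refine h1.trans ?_
      exact div_le_div_of_nonneg_right
        (mul_le_mul_of_nonneg_left h2 (by linarith)) h3.le
    have hfreq : ∃ᶠ r in Filter.atTop, α - ε ≤ T r := htends.frequently hTev.frequently
    have hle := Filter.le_limsup_of_frequently_le hfreq hbdd
    linarith
  rw [hα] at hlower
  rw [hβ] at hupper
  exact ⟨hlower, hupper⟩
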